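/- Fix an integer d ≥ 2, θ > 0, and P_{12},…,P_{1d} > 0 (the first row of a d×d row-stochastic mutation matrix). Define H : ℝ^{d−1} × ℕ^d → ℝ by H(z, n) = ( ∏_{i=2}^d Γ(θP_{1i})/Γ(θP_{1i} + n_i) ) ∏_{i=2}^d z_i^{n_i}, where z = (z_2,…,z_d). For h : ℤ^d → ℝ define the generator of the fast limiting ancestral process by (𝒢h)(n) = ∑_{i=2,…,d : n_i ≥ 1} (1/2)·(n_i(n_i−1)/(n_i − 1 + θP_{1i}))·[h(n − e_i) − h(n)] + ∑_{i=2,…,d : n_i ≥ 1} (1/2)·(n_i θP_{1i}/(n_i − 1 + θP_{1i}))·[h(n − e_i + e_1) − h(n)], and for twice differentiable g : ℝ^{d−1} → ℝ define the generator of the limiting CBI process by (L̃_0 g)(z) = (1/2) ∑_{i=2}^d z_i ∂²g/∂z_i²(z) + ∑_{i=2}^d (1/2)(θP_{1i} − z_i) ∂g/∂z_i(z). Then for every n ∈ ℕ^d and every z ∈ ℝ^{d−1}: 𝒢(H(z, ·))(n) = L̃_0(H(·, n))(z). (This is the generator-level duality between the limiting CBI diffusion and the fast limiting ancestral process with respect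 to the duality function H, which is the content of the asymptotic duality theorem.) -/

import Mathlib

open Finset

noncomputable section

/-- The `i`-th standard unit vector of `ℤ^d`. -/
def stdE {d : ℕ} (i : Fin d) : Fin d → ℤ := fun j => if j = i then 1 else 0

/-- Partial derivative `∂g/∂z_i(z)` of `g : ℝ^d → ℝ`. -/
def pd {d : ℕ} (g : (Fin d → ℝ) → ℝ) (z : Fin d → ℝ) (i : Fin d) : ℝ :=
  fderiv ℝ g z (Pi.single i 1)

/-- Second partial derivative `∂²g/∂z_i∂z_j(z)` of `g : ℝ^d → ℝ`. -/
def pd2 {d : ℕ} (g : (Fin d → ℝ) → ℝ) (z : Fin d → ℝ) (i j : Fin d) : ℝ :=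
  fderiv ℝ (fun y => fderiv ℝ g y (Pi.single j 1)) z (Pi.single i 1)

lemma monomial_hasFDerivAt {m : ℕ} (s : Finset (Fin m)) (c : ℝ) (k : Fin m → ℕ) (y : Fin m → ℝ) :
    HasFDerivAt (fun w : Fin m → ℝ => c * ∏ j ∈ s, w j ^ k j)
      (∑ j ∈ s, (c * (∏ l ∈ s.erase j, y l ^ k l) * (k j * y j ^ (k j - 1))) •
        (ContinuousLinearMap.proj j : (Fin m → ℝ) →L[ℝ] ℝ)) y := by
  have h1 : ∀ j ∈ s, HasFDerivAt (fun w : Fin m → ℝ => w j ^ k j)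
      ((k j * y j ^ (k j - 1)) • (ContinuousLinearMap.proj j : (Fin m → ℝ) →L[ℝ] ℝ)) y := by
    intro j _
    have hp : HasDerivAt (fun t : ℝ => t ^ k j) (k j * y j ^ (k j - 1)) (y j) :=
      hasDerivAt_pow (k j) (y j)
    exact hp.comp_hasFDerivAt y
      ((ContinuousLinearMap.proj j : (Fin m → ℝ) →L[ℝ] ℝ)).hasFDerivAt
  have h2 := (HasFDerivAt.finset_prod h1).const_mul c
  refine HasFDerivAt.congr_fderiv h2 ?_
  rw [Finset.smul_sum]
  refine Finset.sum_congr rfl fun j hj => ?_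
  rw [smul_smul, smul_smul]

lemma fderiv_monomial_apply {m : ℕ} (s : Finset (Fin m)) (c : ℝ) (k : Fin m → ℕ) (y : Fin m → ℝ)
    (i : Fin m) (hi : i ∈ s) :
    fderiv ℝ (fun w : Fin m → ℝ => c * ∏ j ∈ s, w j ^ k j) y (Pi.single i 1)
      = c * (∏ l ∈ s.erase i, y l ^ k l) * (k i * y i ^ (k i - 1)) := by
  rw [(monomial_hasFDerivAt s c k y).fderiv]
  simp only [ContinuousLinearMap.coe_sum', Finset.sum_apply,
    ContinuousLinearMap.smul_apply, ContinuousLinearMap.proj_apply, smul_eq_mul,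
    Pi.single_apply]
  rw [Finset.sum_eq_single i]
  · simp
  · intro b _ hb; simp [hb]
  · intro h; exact absurd hi h

lemma pd_monomial {m : ℕ} (s : Finset (Fin m)) (c : ℝ) (k : Fin m → ℕ) (z : Fin m → ℝ)
    (i : Fin m) (hi : i ∈ s) :
    pd (fun w => c * ∏ j ∈ s, w j ^ k j) z i
      = c * (∏ l ∈ s.erase i, z l ^ k l) * (k i * z i ^ (k i - 1)) :=
  fderiv_monomial_apply s c k z i hi

lemma pd2_monomial {m : ℕ} (s : Finset (Fin m)) (c : ℝ) (k : Fin m → ℕ) (z : Fin m → ℝ)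
    (i : Fin m) (hi : i ∈ s) :
    pd2 (fun w => c * ∏ j ∈ s, w j ^ k j) z i i
      = c * (∏ l ∈ s.erase i, z l ^ k l) *
          ((k i : ℝ) * ((k i - 1 : ℕ) : ℝ) * z i ^ (k i - 1 - 1)) := by
  unfold pd2
  have hprod : ∀ y : Fin m → ℝ,
      ∏ l ∈ s.erase i, y l ^ (Function.update k i (k i - 1)) l
        = ∏ l ∈ s.erase i, y l ^ k l := fun y =>
    Finset.prod_congr rfl fun l hl => by
      rw [Function.update_of_ne (Finset.ne_of_mem_erase hl)]
  have hfun : (fun y => fderiv ℝ (fun w : Fin m → ℝ => c * ∏ j ∈ s, w j ^ k j) y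
        (Pi.single i 1))
      = fun y => (c * k i) * ∏ j ∈ s, y j ^ (Function.update k i (k i - 1)) j := by
    funext y
    rw [fderiv_monomial_apply s c k y i hi,
      ← Finset.mul_prod_erase s (fun j => y j ^ (Function.update k i (k i - 1)) j) hi,
      Function.update_self, hprod y]
    ring
  rw [hfun, fderiv_monomial_apply s (c * k i) _ z i hi, Function.update_self, hprod z]
  ring

/-- **Theorem 6.1 (generator-level asymptotic duality)**: with the duality function
`H(z,n) = (∏_{i=2}^d Γ(θP_{1i})/Γ(θP_{1i}+n_i)) ∏_{i=2}^d z_i^{n_i}`, the generator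
`𝒢` of the fast limiting ancestral process
`(𝒢h)(n) = ∑_{i≥2, n_i≥1} (1/2)(n_i(n_i-1)/(n_i-1+θP_{1i}))[h(n-e_i)-h(n)]
+ ∑_{i≥2, n_i≥1} (1/2)(n_iθP_{1i}/(n_i-1+θP_{1i}))[h(n-e_i+e_1)-h(n)]`
and the generator `L̃₀` of the limiting CBI process
`(L̃₀g)(z) = (1/2)∑_{i=2}^d z_i ∂²g/∂z_i²(z) + ∑_{i=2}^d (1/2)(θP_{1i}-z_i)∂g/∂z_i(z)`
satisfy `𝒢(H(z,·))(n) = L̃₀(H(·,n))(z)` for every `n ∈ ℕ^d` and every `z`.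
(Allele `1` is represented by the index `0 : Fin (d+2)`; the variables `z_2,…,z_d` are
the coordinates `z i`, `i ≠ 0`, of `z : Fin (d+2) → ℝ`.) -/
theorem generator_duality {d : ℕ} (θ : ℝ) (hθ : 0 < θ)
    (P1 : Fin (d + 2) → ℝ) (hP1 : ∀ i : Fin (d + 2), i ≠ 0 → 0 < P1 i)
    (H : (Fin (d + 2) → ℝ) → (Fin (d + 2) → ℤ) → ℝ)
    (hH : ∀ z m, H z m =
      (∏ i ∈ univ.erase 0, Real.Gamma (θ * P1 i) / Real.Gamma (θ * P1 i + (m i : ℝ)))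
        * ∏ i ∈ univ.erase 0, z i ^ (m i).toNat)
    (G : ((Fin (d + 2) → ℤ) → ℝ) → (Fin (d + 2) → ℤ) → ℝ)
    (hG : ∀ h m, G h m =
      (∑ i ∈ (univ.erase 0).filter (fun i => 1 ≤ m i),
        (1 / 2) * ((m i : ℝ) * ((m i : ℝ) - 1) / ((m i : ℝ) - 1 + θ * P1 i))
          * (h (m - stdE i) - h m))
      + ∑ i ∈ (univ.erase 0).filter (fun i => 1 ≤ m i),
          (1 / 2) * ((m i : ℝ) * (θ * P1 i) / ((m i : ℝ) - 1 + θ * P1 i))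
            * (h (m - stdE i + stdE 0) - h m))
    (L₀ : ((Fin (d + 2) → ℝ) → ℝ) → (Fin (d + 2) → ℝ) → ℝ)
    (hL₀ : ∀ g z, L₀ g z =
      (1 / 2) * (∑ i ∈ univ.erase 0, z i * pd2 g z i i)
        + ∑ i ∈ univ.erase 0, (1 / 2) * (θ * P1 i - z i) * pd g z i)
    (n : Fin (d + 2) → ℤ) (hn : ∀ i, 0 ≤ n i) (z : Fin (d + 2) → ℝ) :
    G (fun m => H z m) n = L₀ (fun w => H w n) z := by
  classical
  -- monomial form of w ↦ H w n
  have hgfun : (fun w => H w n) = (fun w : Fin (d + 2) → ℝ =>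
      (∏ j ∈ univ.erase 0, Real.Gamma (θ * P1 j) / Real.Gamma (θ * P1 j + (n j : ℝ)))
        * ∏ j ∈ univ.erase 0, w j ^ (n j).toNat) := by
    funext w; exact hH w n
  simp only [hG, hL₀, hgfun]
  rw [← Finset.sum_add_distrib, Finset.mul_sum, ← Finset.sum_add_distrib,
    Finset.sum_filter]
  refine Finset.sum_congr rfl fun i hiS => ?_
  have hi0 : i ≠ 0 := (Finset.mem_erase.mp hiS).1
  have hai : 0 < θ * P1 i := mul_pos hθ (hP1 i hi0)
  have hpd := pd_monomial (univ.erase 0)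
    (∏ j ∈ univ.erase 0, Real.Gamma (θ * P1 j) / Real.Gamma (θ * P1 j + (n j : ℝ)))
    (fun j => (n j).toNat) z i hiS
  have hpd2 := pd2_monomial (univ.erase 0)
    (∏ j ∈ univ.erase 0, Real.Gamma (θ * P1 j) / Real.Gamma (θ * P1 j + (n j : ℝ)))
    (fun j => (n j).toNat) z i hiS
  rw [hpd, hpd2]
  by_cases hni : 1 ≤ n i
  · rw [if_pos hni]
    have hN1 : (1:ℝ) ≤ (n i : ℝ) := by exact_mod_cast hni
    have hD : ((n i : ℝ) - 1 + θ * P1 i) ≠ 0 := by nlinarith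
    have hE : (0:ℝ) < θ * P1 i + ((n i : ℝ) - 1) := by linarith
    have hG1pos : 0 < Real.Gamma (θ * P1 i + ((n i : ℝ) - 1)) :=
      Real.Gamma_pos_of_pos hE
    have hgrec : Real.Gamma (θ * P1 i + (n i : ℝ))
        = (θ * P1 i + ((n i : ℝ) - 1)) * Real.Gamma (θ * P1 i + ((n i : ℝ) - 1)) := by
      rw [show θ * P1 i + (n i : ℝ) = (θ * P1 i + ((n i : ℝ) - 1)) + 1 by ring,
        Real.Gamma_add_one (ne_of_gt hE)]
    have hHz : H z n =
        (∏ j ∈ univ.erase 0, Real.Gamma (θ * P1 j) / Real.Gamma (θ * P1 j + (n j : ℝ)))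
          * (z i ^ (n i).toNat * ∏ x ∈ (univ.erase 0).erase i, z x ^ (n x).toNat) := by
      rw [hH, ← Finset.mul_prod_erase (univ.erase 0) (fun x => z x ^ (n x).toNat) hiS]
    have e2 : ∀ j, j ≠ i → (n - stdE i) j = n j := by
      intro j hj; simp [stdE, hj]
    have e1 : (n - stdE i) i = n i - 1 := by simp [stdE]
    have e3 : ((n - stdE i) i).toNat = (n i).toNat - 1 := by rw [e1]; omega
    have e4 : ∏ j ∈ (univ.erase 0).erase i,
          Real.Gamma (θ * P1 j) / Real.Gamma (θ * P1 j + (((n - stdE i) j : ℤ) : ℝ))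
        = ∏ j ∈ (univ.erase 0).erase i,
            Real.Gamma (θ * P1 j) / Real.Gamma (θ * P1 j + (n j : ℝ)) :=
      Finset.prod_congr rfl fun j hj => by rw [e2 j (Finset.ne_of_mem_erase hj)]
    have e5 : ∏ x ∈ (univ.erase 0).erase i, z x ^ ((n - stdE i) x).toNat
        = ∏ x ∈ (univ.erase 0).erase i, z x ^ (n x).toNat :=
      Finset.prod_congr rfl fun x hx => by rw [e2 x (Finset.ne_of_mem_erase hx)]
    have hHm1 : H z (n - stdE i) =
        ((θ * P1 i + ((n i : ℝ) - 1)) *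
          ∏ j ∈ univ.erase 0, Real.Gamma (θ * P1 j) / Real.Gamma (θ * P1 j + (n j : ℝ)))
          * (z i ^ ((n i).toNat - 1) * ∏ x ∈ (univ.erase 0).erase i, z x ^ (n x).toNat) := by
      have hratio : (θ * P1 i + ((n i : ℝ) - 1)) *
            (Real.Gamma (θ * P1 i) / Real.Gamma (θ * P1 i + (n i : ℝ)))
          = Real.Gamma (θ * P1 i) / Real.Gamma (θ * P1 i + ((n i : ℝ) - 1)) := by
        rw [hgrec]
        field_simp
      rw [hH,
        ← Finset.mul_prod_erase (univ.erase 0)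
          (fun j => Real.Gamma (θ * P1 j) / Real.Gamma (θ * P1 j + (((n - stdE i) j : ℤ) : ℝ))) hiS,
        ← Finset.mul_prod_erase (univ.erase 0)
          (fun x => z x ^ ((n - stdE i) x).toNat) hiS,
        ← Finset.mul_prod_erase (univ.erase 0)
          (fun j => Real.Gamma (θ * P1 j) / Real.Gamma (θ * P1 j + (n j : ℝ))) hiS,
        e4, e5, e3, e1]
      have hc : ((n i - 1 : ℤ) : ℝ) = (n i : ℝ) - 1 := by push_cast; ring
      rw [hc, ← hratio]
      ring
    have hHm2 : H z (n - stdE i + stdE 0) = H z (n - stdE i) := by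
      have hjj : ∀ j : Fin (d + 2), j ≠ 0 →
          (n - stdE i + stdE (0 : Fin (d + 2))) j = (n - stdE i) j := by
        intro j hj
        have h00 : stdE (0 : Fin (d + 2)) j = 0 := by simp [stdE, hj]
        simp [Pi.add_apply, h00]
      rw [hH, hH]
      congr 1
      · exact Finset.prod_congr rfl fun j hj => by
          rw [hjj j (Finset.mem_erase.mp hj).1]
      · exact Finset.prod_congr rfl fun j hj => by
          rw [hjj j (Finset.mem_erase.mp hj).1]
    rw [hHm2, hHm1, hHz]
    generalize (∏ j ∈ univ.erase 0,
      Real.Gamma (θ * P1 j) / Real.Gamma (θ * P1 j + (n j : ℝ))) = Cv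
    generalize (∏ x ∈ (univ.erase 0).erase i, z x ^ (n x).toNat) = Pv
    have hNK : ((n i : ℤ) : ℝ) = (((n i).toNat : ℕ) : ℝ) := by
      exact_mod_cast (Int.toNat_of_nonneg (hn i)).symm
    rw [hNK] at hD ⊢
    obtain ⟨K, hK⟩ : ∃ K, (n i).toNat = K + 1 := ⟨(n i).toNat - 1, by omega⟩
    rw [hK] at hD ⊢
    simp only [Nat.add_sub_cancel] at hD ⊢
    cases K with
    | zero =>
      norm_num
      field_simp [(hP1 i hi0).ne']
    | succ m =>
      simp only [Nat.add_sub_cancel]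
      push_cast at hD ⊢
      field_simp
      ring
  · rw [if_neg hni]
    have h0 : (n i).toNat = 0 := by omega
    rw [h0]
    push_cast
    ring
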